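/- Let G be a very well-covered graph with 2n vertices satisfying (∗). A prime ideal 𝔭 is an associated prime of R/I(G) (equivalently, the complement of its generators is a maximum independent set, since G is unmixed) if and only if 𝔭 = (x_i : i ∉ Ω_A) + (y_i : i ∈ Ω_A) for some antichain A in the condensation 𝔡̂_G such that Ω_A contains no undirected edge of 𝔡_G. Equivalently, in graph language: the minimal vertex covers of G are exactly the sets {x_i : i ∉ Ω_A} ∪ {y_i : i ∈ Ω_A} over such antichains A. -/
import Mathlib


open Relation

/-- `C` is a vertex cover of `G`. -/
def IsVC {V : Type*} (G : SimpleGraph V) (C : Set V) : Prop :=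
  ∀ ⦃u v : V⦄, G.Adj u v → u ∈ C ∨ v ∈ C

/-- `C` is a minimal vertex cover of `G`. -/
def IsMinVC {V : Type*} (G : SimpleGraph V) (C : Set V) : Prop :=
  IsVC G C ∧ ∀ D : Set V, IsVC G D → D ⊆ C → D = C

/-- `S` is an independent set of `G`. -/
def IsIndep {V : Type*} (G : SimpleGraph V) (S : Set V) : Prop :=
  ∀ u ∈ S, ∀ v ∈ S, ¬ G.Adj u v

/-- `S` is a maximal independent set of `G`. -/
def IsMaxIndep {V : Type*} (G : SimpleGraph V) (S : Set V) : Prop :=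
  IsIndep G S ∧ ∀ T : Set V, IsIndep G T → S ⊆ T → T = S

/-- `G` has no isolated vertices. -/
def NoIsolated {V : Type*} (G : SimpleGraph V) : Prop := ∀ v, ∃ w, G.Adj v w

/-- The vertex set `{x_1,...,x_n} ∪ {y_1,...,y_n}`: `xv i = Sum.inl i`, `yv i = Sum.inr i`. -/
abbrev Vtx (n : ℕ) := Fin n ⊕ Fin n

def xv {n : ℕ} (i : Fin n) : Vtx n := Sum.inl i
def yv {n : ℕ} (i : Fin n) : Vtx n := Sum.inr i

/-- Condition (∗): X is a minimal vertex cover, Y is a maximal independent set,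
and `x_i y_i` is an edge for every `i`. -/
def StarCond {n : ℕ} (G : SimpleGraph (Vtx n)) : Prop :=
  IsMinVC G (Set.range xv) ∧ IsMaxIndep G (Set.range yv) ∧ ∀ i, G.Adj (xv i) (yv i)

/-- Condition (∗∗): `x_i y_j ∈ E(G)` implies `i ≤ j`. -/
def StarStarCond {n : ℕ} (G : SimpleGraph (Vtx n)) : Prop :=
  ∀ i j : Fin n, G.Adj (xv i) (yv j) → i ≤ j

/-- Condition (i): for distinct `i,j,k` and `z_i ∈ {x_i,y_i}`, if `z_i x_j` and `y_j x_k`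
are edges then so is `z_i x_k`. -/
def CondI {n : ℕ} (G : SimpleGraph (Vtx n)) : Prop :=
  ∀ i j k : Fin n, i ≠ j → j ≠ k → i ≠ k →
    ∀ z ∈ ({xv i, yv i} : Set (Vtx n)),
      G.Adj z (xv j) → G.Adj (yv j) (xv k) → G.Adj z (xv k)

/-- Condition (ii): `x_i y_j ∈ E(G)` implies `x_i x_j ∉ E(G)`. -/
def CondII {n : ℕ} (G : SimpleGraph (Vtx n)) : Prop :=
  ∀ i j : Fin n, G.Adj (xv i) (yv j) → ¬ G.Adj (xv i) (xv j)

/-- The minimum vertex cover size of `G` (the height of the edge ideal) is at least `n`. -/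
def HeightN {n : ℕ} (G : SimpleGraph (Vtx n)) : Prop :=
  ∀ C : Finset (Vtx n), IsVC G ↑C → n ≤ C.card

/-- Directed edge `i → j` of the semidirected graph `𝔡_G`. -/
def dirEdge {n : ℕ} (G : SimpleGraph (Vtx n)) (i j : Fin n) : Prop :=
  i ≠ j ∧ G.Adj (xv i) (yv j)

/-- Undirected edge `ij` of the semidirected graph `𝔡_G`. -/
def undirEdge {n : ℕ} (G : SimpleGraph (Vtx n)) (i j : Fin n) : Prop :=
  G.Adj (xv i) (xv j)
/-- The strong-connectivity setoid of a relation: mutual reachability. -/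
def scSetoid {α : Type*} (r : α → α → Prop) : Setoid α where
  r i j := ReflTransGen r i j ∧ ReflTransGen r j i
  iseqv := ⟨fun _ => ⟨.refl, .refl⟩, fun h => ⟨h.2, h.1⟩,
    fun h1 h2 => ⟨h1.1.trans h2.1, h2.2.trans h1.2⟩⟩

/-- The set of strong components of the semidirected graph `𝔡_G`. -/
def SC {n : ℕ} (G : SimpleGraph (Vtx n)) : Type :=
  Quotient (scSetoid (dirEdge G))

/-- The class of `i` in the strong components. -/
def scMk {n : ℕ} (G : SimpleGraph (Vtx n)) (i : Fin n) : SC G :=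
  Quotient.mk (scSetoid (dirEdge G)) i

/-- Directed edge `a → b` of the condensation `𝔡̂_G`: the components are distinct and
there is a directed path in `𝔡_G` from a vertex of `Z_a` to a vertex of `Z_b`. -/
def condDir {n : ℕ} (G : SimpleGraph (Vtx n)) (a b : SC G) : Prop :=
  a ≠ b ∧ ∃ i j : Fin n, scMk G i = a ∧ scMk G j = b ∧ ReflTransGen (dirEdge G) i j

/-- Undirected edge `ab` of the condensation `𝔡̂_G`. -/
def condUndir {n : ℕ} (G : SimpleGraph (Vtx n)) (a b : SC G) : Prop :=
  a ≠ b ∧ ∃ i j : Fin n, scMk G i = a ∧ scMk G j = b ∧ undirEdge G i j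

/-- `A'` is an antichain of the condensation `𝔡̂_G`. -/
def AntichainC {n : ℕ} (G : SimpleGraph (Vtx n)) (A' : Finset (SC G)) : Prop :=
  ∀ a ∈ A', ∀ b ∈ A', a ≠ b → ¬ TransGen (condDir G) a b

/-- `Ω_{A'}` for an antichain `A'` of the condensation: the union of the components `Z_b`
with `b ⪰ a` for some `a ∈ A'`. -/
def OmegaC {n : ℕ} (G : SimpleGraph (Vtx n)) (A' : Finset (SC G)) : Set (Fin n) :=
  {j | ∃ a ∈ A', ReflTransGen (condDir G) a (scMk G j)}

/-- The vertex set `{x_i : i ∉ Ω} ∪ {y_i : i ∈ Ω}`. -/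
def coverOf {n : ℕ} (Ω : Set (Fin n)) : Set (Vtx n) :=
  {v | ∃ i : Fin n, (v = xv i ∧ i ∉ Ω) ∨ (v = yv i ∧ i ∈ Ω)}

section AuxLemmas

variable {n : ℕ} {G : SimpleGraph (Vtx n)}

lemma xv_ne_yv {i j : Fin n} : xv i ≠ yv j := by simp [xv, yv]

lemma mem_coverOf_x {Ω : Set (Fin n)} {i : Fin n} : xv i ∈ coverOf Ω ↔ i ∉ Ω := by
  constructor
  · rintro ⟨j, ⟨hj, hjo⟩ | ⟨hj, hjo⟩⟩
    · obtain rfl : i = j := Sum.inl.inj hj; exact hjo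
    · exact absurd hj xv_ne_yv
  · exact fun h => ⟨i, Or.inl ⟨rfl, h⟩⟩

lemma mem_coverOf_y {Ω : Set (Fin n)} {i : Fin n} : yv i ∈ coverOf Ω ↔ i ∈ Ω := by
  constructor
  · rintro ⟨j, ⟨hj, hjo⟩ | ⟨hj, hjo⟩⟩
    · exact absurd hj.symm xv_ne_yv
    · obtain rfl : i = j := Sum.inr.inj hj; exact hjo
  · exact fun h => ⟨i, Or.inr ⟨rfl, h⟩⟩

lemma no_yy (hstar : StarCond G) {i j : Fin n} : ¬ G.Adj (yv i) (yv j) :=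
  hstar.2.1.1 _ ⟨i, rfl⟩ _ ⟨j, rfl⟩

lemma private_edge {C : Set (Vtx n)} (hmin : IsMinVC G C) {v} (hv : v ∈ C) :
    ∃ w, G.Adj v w ∧ w ∉ C := by
  by_contra h
  push_neg at h
  have hvc : IsVC G (C \ {v}) := by
    intro u w huw
    by_cases hu : u = v
    · subst hu
      exact Or.inr ⟨h w huw, fun hw => G.ne_of_adj huw (by simpa using hw.symm)⟩
    · by_cases hw : w = v
      · subst hw
        exact Or.inl ⟨h u huw.symm, by simpa using hu⟩
      · rcases hmin.1 huw with h' | h'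
        · exact Or.inl ⟨h', by simpa using hu⟩
        · exact Or.inr ⟨h', by simpa using hw⟩
  have heq := hmin.2 _ hvc Set.diff_subset
  rw [← heq] at hv
  exact hv.2 rfl

lemma not_both (hstar : StarCond G) (h1 : CondI G) (h2 : CondII G)
    {C : Set (Vtx n)} (hmin : IsMinVC G C) (i : Fin n) :
    ¬ (xv i ∈ C ∧ yv i ∈ C) := by
  rintro ⟨hx, hy⟩
  obtain ⟨w, hadj, hw⟩ := private_edge hmin hy
  obtain ⟨k, rfl⟩ : ∃ k, w = xv k := by
    cases w with
    | inl k => exact ⟨k, rfl⟩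
    | inr k => exact absurd hadj (no_yy hstar)
  have hki : k ≠ i := fun h => hw (h ▸ hx)
  obtain ⟨u, hadj', hu⟩ := private_edge hmin hx
  cases u with
  | inl j =>
    have hij : i ≠ j := fun h => G.ne_of_adj hadj' (by rw [h]; rfl)
    by_cases hjk : j = k
    · subst hjk
      exact h2 j i hadj.symm hadj'.symm
    · have hcon : G.Adj (xv j) (xv k) :=
        h1 j i k hij.symm hki.symm hjk (xv j) (Set.mem_insert _ _) hadj'.symm hadj
      rcases hmin.1 hcon with h' | h'
      · exact hu h'
      · exact hw h'
  | inr j =>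
    have hij : i ≠ j := fun h => hu (h ▸ hy)
    by_cases hjk : j = k
    · subst hjk
      rcases hmin.1 (hstar.2.2 j) with h' | h'
      · exact hw h'
      · exact hu h'
    · have hcon : G.Adj (yv j) (xv k) :=
        h1 j i k hij.symm hki.symm hjk (yv j)
          (Set.mem_insert_of_mem _ rfl) hadj'.symm hadj
      rcases hmin.1 hcon with h' | h'
      · exact hu h'
      · exact hw h'

lemma mutual_of_scMk_eq {i j : Fin n} (h : scMk G i = scMk G j) :
    Relation.ReflTransGen (dirEdge G) i j := (Quotient.exact h).1

lemma scMk_exists (a : SC G) : ∃ i, scMk G i = a := Quot.exists_rep a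

lemma cond_to_base {a b : SC G} (h : Relation.ReflTransGen (condDir G) a b) :
    ∀ i j : Fin n, scMk G i = a → scMk G j = b → Relation.ReflTransGen (dirEdge G) i j := by
  induction h with
  | refl => exact fun i j hi hj => mutual_of_scMk_eq (hi.trans hj.symm)
  | tail h1 h2 ih =>
    intro i j hi hj
    obtain ⟨-, i', j', hi', hj', hp⟩ := h2
    exact ((ih i i' hi hi').trans hp).trans (mutual_of_scMk_eq (hj'.trans hj.symm))

lemma base_to_cond {i j : Fin n} (h : Relation.ReflTransGen (dirEdge G) i j) :
    Relation.ReflTransGen (condDir G) (scMk G i) (scMk G j) := by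
  induction h with
  | refl => exact .refl
  | @tail b c h1 h2 ih =>
    by_cases he : scMk G b = scMk G c
    · rwa [← he]
    · exact ih.tail ⟨he, b, c, rfl, rfl, .single h2⟩

lemma cond_antisymm {a b : SC G} (h1 : Relation.ReflTransGen (condDir G) a b)
    (h2 : Relation.ReflTransGen (condDir G) b a) : a = b := by
  obtain ⟨i, rfl⟩ := scMk_exists (G := G) a
  obtain ⟨j, rfl⟩ := scMk_exists (G := G) b
  exact Quotient.sound ⟨cond_to_base h1 i j rfl rfl, cond_to_base h2 j i rfl rfl⟩

lemma not_transGen_self (a : SC G) : ¬ Relation.TransGen (condDir G) a a := by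
  intro h
  cases h with
  | single h' => exact h'.1 rfl
  | tail h1 h2 =>
    exact h2.1 (cond_antisymm (Relation.ReflTransGen.single h2) h1.to_reflTransGen)

lemma omegaC_closed (A' : Finset (SC G)) {j m : Fin n} (hj : j ∈ OmegaC G A')
    (h : dirEdge G j m) : m ∈ OmegaC G A' := by
  obtain ⟨a, ha, hr⟩ := hj
  by_cases he : scMk G j = scMk G m
  · exact ⟨a, ha, he ▸ hr⟩
  · exact ⟨a, ha, hr.tail ⟨he, j, m, rfl, rfl, .single h⟩⟩

lemma coverOf_eq_coe (Ω : Set (Fin n)) [DecidablePred (· ∈ Ω)] :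
    coverOf Ω = ↑(Finset.univ.image (fun i => if i ∈ Ω then yv i else xv i)) := by
  ext v
  simp only [Finset.coe_image, Finset.coe_univ, Set.image_univ, Set.mem_range]
  constructor
  · rintro ⟨i, ⟨rfl, hi⟩ | ⟨rfl, hi⟩⟩
    · exact ⟨i, if_neg hi⟩
    · exact ⟨i, if_pos hi⟩
  · rintro ⟨i, rfl⟩
    by_cases hi : i ∈ Ω
    · rw [if_pos hi]; exact ⟨i, Or.inr ⟨rfl, hi⟩⟩
    · rw [if_neg hi]; exact ⟨i, Or.inl ⟨rfl, hi⟩⟩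

lemma coverOf_card (Ω : Set (Fin n)) [DecidablePred (· ∈ Ω)] :
    (Finset.univ.image (fun i => if i ∈ Ω then yv i else xv i)).card = n := by
  have hinj : Function.Injective (fun i : Fin n => if i ∈ Ω then yv i else xv i) := by
    intro a b h
    by_cases ha : a ∈ Ω <;> by_cases hb : b ∈ Ω <;>
      simp only [if_pos, if_neg, ha, hb, xv, yv] at h <;> simp_all [xv, yv]
  rw [Finset.card_image_of_injective _ hinj, Finset.card_univ, Fintype.card_fin]

lemma isMinVC_of_card (hht : HeightN G) (Cfin : Finset (Vtx n)) (hcard : Cfin.card = n)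
    (hvc : IsVC G ↑Cfin) : IsMinVC G ↑Cfin := by
  classical
  refine ⟨hvc, fun D hD hsub => ?_⟩
  by_contra hne
  obtain ⟨v, hvC, hvD⟩ := Set.exists_of_ssubset (hsub.ssubset_of_ne hne)
  have hvC' : v ∈ Cfin := hvC
  have hfin : D.Finite := Set.toFinite D
  have hsubfin : hfin.toFinset ⊆ Cfin.erase v := by
    intro w hw
    rw [Set.Finite.mem_toFinset] at hw
    exact Finset.mem_erase.mpr ⟨fun h => hvD (h ▸ hw), hsub hw⟩
  have hge := hht hfin.toFinset (by rw [Set.Finite.coe_toFinset]; exact hD)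
  have hle := Finset.card_le_card hsubfin
  rw [Finset.card_erase_of_mem hvC', hcard] at hle
  have hpos : 0 < n := by
    rw [← hcard]; exact Finset.card_pos.mpr ⟨v, hvC'⟩
  omega

lemma isVC_coverOf (hstar : StarCond G) {Ω : Set (Fin n)}
    (hclosed : ∀ i ∈ Ω, ∀ j, dirEdge G i j → j ∈ Ω)
    (hnu : ∀ i ∈ Ω, ∀ j ∈ Ω, ¬ undirEdge G i j) :
    IsVC G (coverOf Ω) := by
  intro u v huv
  cases u with
  | inl i =>
    cases v with
    | inl j =>
      by_cases hi : i ∈ Ω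
      · right
        exact mem_coverOf_x.mpr fun hj => hnu i hi j hj huv
      · left; exact mem_coverOf_x.mpr hi
    | inr j =>
      by_cases hi : i ∈ Ω
      · right
        refine mem_coverOf_y.mpr ?_
        by_cases hij : i = j
        · exact hij ▸ hi
        · exact hclosed i hi j ⟨hij, huv⟩
      · left; exact mem_coverOf_x.mpr hi
  | inr i =>
    cases v with
    | inl j =>
      by_cases hj : j ∈ Ω
      · left
        refine mem_coverOf_y.mpr ?_
        by_cases hij : j = i
        · exact hij ▸ hj
        · exact hclosed j hj i ⟨hij, huv.symm⟩
      · right; exact mem_coverOf_x.mpr hj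
    | inr j => exact absurd huv (no_yy hstar)

lemma exists_antichain (hstar : StarCond G) (h1 : CondI G) (h2 : CondII G)
    {C : Set (Vtx n)} (hmin : IsMinVC G C) :
    ∃ A' : Finset (SC G), AntichainC G A' ∧
      (∀ i ∈ OmegaC G A', ∀ j ∈ OmegaC G A', ¬ undirEdge G i j) ∧
      C = coverOf (OmegaC G A') := by
  classical
  set Ω : Set (Fin n) := {i | xv i ∉ C} with hΩdef
  have hnb := not_both hstar h1 h2 hmin
  have hyC : ∀ i, yv i ∈ C ↔ i ∈ Ω := by
    intro i
    constructor
    · exact fun hy hx => hnb i ⟨hx, hy⟩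
    · intro hnx
      rcases hmin.1 (hstar.2.2 i) with h' | h'
      · exact absurd h' hnx
      · exact h'
  have hCeq : C = coverOf Ω := by
    ext v
    cases v with
    | inl i =>
      rw [show (Sum.inl i : Vtx n) = xv i from rfl, mem_coverOf_x]
      constructor
      · exact fun hx hno => hno hx
      · exact fun h => by_contra fun hx => h hx
    | inr i =>
      rw [show (Sum.inr i : Vtx n) = yv i from rfl, mem_coverOf_y]
      exact hyC i
  have hclosed : ∀ i ∈ Ω, ∀ j, dirEdge G i j → j ∈ Ω := by
    intro i hi j hd
    have hy : yv j ∈ C := by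
      rcases hmin.1 hd.2 with h' | h'
      · exact absurd h' hi
      · exact h'
    exact fun hx => hnb j ⟨hx, hy⟩
  have hreach : ∀ i ∈ Ω, ∀ j, Relation.ReflTransGen (dirEdge G) i j → j ∈ Ω := by
    intro i hi j h
    induction h with
    | refl => exact hi
    | tail h1 h2 ih => exact hclosed _ ih _ h2
  have hnu : ∀ i ∈ Ω, ∀ j ∈ Ω, ¬ undirEdge G i j := by
    intro i hi j hj hu
    rcases hmin.1 hu with h' | h'
    · exact hi h'
    · exact hj h'
  set comps : Finset (SC G) := (Finset.univ.filter (fun i => i ∈ Ω)).image (scMk G)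
    with hcompsdef
  have hcomps : ∀ a, a ∈ comps ↔ ∃ i, i ∈ Ω ∧ scMk G i = a := by
    intro a; simp [hcompsdef]
  set A' : Finset (SC G) :=
    comps.filter (fun a => ∀ b ∈ comps, b ≠ a → ¬ Relation.TransGen (condDir G) b a)
    with hA'def
  have hanti : AntichainC G A' := by
    intro a ha b hb hab htg
    rw [hA'def, Finset.mem_filter] at ha hb
    exact hb.2 a ha.1 hab htg
  have hsub1 : OmegaC G A' ⊆ Ω := by
    rintro j ⟨a, ha, hr⟩
    rw [hA'def, Finset.mem_filter] at ha
    obtain ⟨i, hiΩ, hia⟩ := (hcomps a).mp ha.1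
    exact hreach i hiΩ j (cond_to_base hr i j hia rfl)
  have key : ∀ m : ℕ, ∀ c ∈ comps,
      (comps.filter (fun b => b ≠ c ∧ Relation.TransGen (condDir G) b c)).card ≤ m →
      ∃ a ∈ A', Relation.ReflTransGen (condDir G) a c := by
    intro m
    induction m with
    | zero =>
      intro c hc hcard
      refine ⟨c, Finset.mem_filter.mpr ⟨hc, fun b hb hbc htg => ?_⟩, .refl⟩
      have hmem : b ∈ comps.filter (fun b => b ≠ c ∧ Relation.TransGen (condDir G) b c) :=
        Finset.mem_filter.mpr ⟨hb, hbc, htg⟩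
      have := Finset.card_pos.mpr ⟨b, hmem⟩
      omega
    | succ m ih =>
      intro c hc hcard
      by_cases hne : (comps.filter (fun b => b ≠ c ∧ Relation.TransGen (condDir G) b c)).Nonempty
      · obtain ⟨b, hb⟩ := hne
        rw [Finset.mem_filter] at hb
        obtain ⟨hbmem, hbne, hbtg⟩ := hb
        have hss : comps.filter (fun b' => b' ≠ b ∧ Relation.TransGen (condDir G) b' b) ⊆
            (comps.filter (fun b' => b' ≠ c ∧ Relation.TransGen (condDir G) b' c)).erase b := by
          intro b' hb'
          rw [Finset.mem_filter] at hb'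
          refine Finset.mem_erase.mpr ⟨hb'.2.1, Finset.mem_filter.mpr ⟨hb'.1, ?_, hb'.2.2.trans hbtg⟩⟩
          intro h
          subst h
          exact not_transGen_self b' (hb'.2.2.trans hbtg)
        have hcard' : (comps.filter
            (fun b' => b' ≠ b ∧ Relation.TransGen (condDir G) b' b)).card ≤ m := by
          have hle := Finset.card_le_card hss
          have hbmem' : b ∈ comps.filter
              (fun b' => b' ≠ c ∧ Relation.TransGen (condDir G) b' c) :=
            Finset.mem_filter.mpr ⟨hbmem, ⟨hbne, hbtg⟩⟩
          have hme := Finset.card_erase_of_mem hbmem'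
          omega
        obtain ⟨a, haA, har⟩ := ih b hbmem hcard'
        exact ⟨a, haA, har.trans hbtg.to_reflTransGen⟩
      · refine ⟨c, Finset.mem_filter.mpr ⟨hc, fun b hb hbc htg => ?_⟩, .refl⟩
        exact hne ⟨b, Finset.mem_filter.mpr ⟨hb, hbc, htg⟩⟩
  have hsub2 : Ω ⊆ OmegaC G A' := by
    intro j hj
    have hc : scMk G j ∈ comps := (hcomps _).mpr ⟨j, hj, rfl⟩
    obtain ⟨a, haA, har⟩ := key _ _ hc le_rfl
    exact ⟨a, haA, har⟩
  have hOm : OmegaC G A' = Ω := hsub1.antisymm hsub2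
  exact ⟨A', hanti, by rw [hOm]; exact hnu, by rw [hOm]; exact hCeq⟩

end AuxLemmas

/-- Lemma 4.8, in graph language. Let `G` be a very well-covered graph
with `2n` vertices satisfying (∗). The minimal vertex covers of `G` (i.e. the associated
primes of `R/I(G)`) are exactly the sets `{x_i : i ∉ Ω_A} ∪ {y_i : i ∈ Ω_A}`, for `A` an
antichain of the condensation `𝔡̂_G` such that `Ω_A` contains no undirected edge of `𝔡_G`. -/
theorem minimal_covers_classification {n : ℕ} (G : SimpleGraph (Vtx n))
    (hiso : NoIsolated G) (hht : HeightN G) (hstar : StarCond G)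
    (h1 : CondI G) (h2 : CondII G) :
    ∀ C : Set (Vtx n), IsMinVC G C ↔
      ∃ A' : Finset (SC G), AntichainC G A' ∧
        (∀ i ∈ OmegaC G A', ∀ j ∈ OmegaC G A', ¬ undirEdge G i j) ∧
        C = coverOf (OmegaC G A') := by
  intro C
  constructor
  · exact fun hmin => exists_antichain hstar h1 h2 hmin
  · rintro ⟨A', hA, hnu, rfl⟩
    classical
    have hclosed : ∀ i ∈ OmegaC G A', ∀ j, dirEdge G i j → j ∈ OmegaC G A' :=
      fun i hi j hd => omegaC_closed A' hi hd
    have hvc := isVC_coverOf hstar hclosed hnu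
    rw [coverOf_eq_coe (OmegaC G A')] at hvc ⊢
    exact isMinVC_of_card hht _ (coverOf_card _) hvc
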